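/- Let k be a field, let G and G' be groups, and let V and V' be finite-dimensional k-vector spaces equipped with linear representations ρ: G → GL(V) and ρ': G' → GL(V'). Regard V ⊗ₖ V' as a representation of the product group G × G' via (g,g')·(v ⊗ v') = ρ(g)v ⊗ ρ'(g')v'. If the first group cohomology groups H¹(G, V) and H¹(G', V') both vanish, then H¹(G × G', V ⊗ₖ V') = 0. -/

import Mathlib

open TensorProduct groupCohomology

set_option linter.unusedSectionVars false

open TensorProduct

variable {k : Type} [Field k] {V V' : Type} [AddCommGroup V] [Module k V]
  [AddCommGroup V'] [Module k V']

section coords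
variable {ι : Type} [Fintype ι] [DecidableEq ι]

noncomputable def phi (b : Module.Basis ι k V') (i : ι) : V ⊗[k] V' →ₗ[k] V :=
  (TensorProduct.rid k V).toLinearMap.comp (LinearMap.lTensor V (b.coord i))

omit [Fintype ι] [DecidableEq ι] in
lemma phi_tmul (b : Module.Basis ι k V') (i : ι) (v : V) (v' : V') :
    phi b i (v ⊗ₜ v') = b.coord i v' • v := by
  simp [phi, TensorProduct.smul_tmul']

lemma phi_recon (b : Module.Basis ι k V') (w : V ⊗[k] V') :
    ∑ i, phi b i w ⊗ₜ[k] b i = w := by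
  have : (∑ i, ((TensorProduct.mk k V V').flip (b i)).comp (phi b i) : V ⊗[k] V' →ₗ[k] V ⊗[k] V')
      = LinearMap.id := by
    apply TensorProduct.ext'
    intro v v'
    simp only [LinearMap.sum_apply, LinearMap.coe_comp, Function.comp_apply, phi_tmul,
      TensorProduct.mk_apply, LinearMap.flip_apply, LinearMap.id_apply]
    simp_rw [TensorProduct.smul_tmul, ← TensorProduct.tmul_sum, Module.Basis.coord_apply,
      Module.Basis.sum_repr]
  simpa using LinearMap.congr_fun this w

omit [Fintype ι] [DecidableEq ι] in
lemma phi_equivariant (b : Module.Basis ι k V') (i : ι) (T : V →ₗ[k] V) (w : V ⊗[k] V') :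
    phi b i (TensorProduct.map T LinearMap.id w) = T (phi b i w) := by
  have : (phi b i).comp (TensorProduct.map T LinearMap.id) = T.comp (phi b i) := by
    apply TensorProduct.ext'
    intro v v'
    simp [phi_tmul, map_smul]
  exact LinearMap.congr_fun this w

noncomputable def psi (c : Module.Basis ι k V) (i : ι) : V ⊗[k] V' →ₗ[k] V' :=
  (TensorProduct.lid k V').toLinearMap.comp (LinearMap.rTensor V' (c.coord i))

omit [Fintype ι] [DecidableEq ι] in
lemma psi_tmul (c : Module.Basis ι k V) (i : ι) (v : V) (v' : V') :
    psi c i (v ⊗ₜ v') = c.coord i v • v' := by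
  simp [psi, TensorProduct.smul_tmul]

lemma psi_recon (c : Module.Basis ι k V) (w : V ⊗[k] V') :
    ∑ i, c i ⊗ₜ[k] psi c i w = w := by
  have : (∑ i, ((TensorProduct.mk k V V') (c i)).comp (psi c i) : V ⊗[k] V' →ₗ[k] V ⊗[k] V')
      = LinearMap.id := by
    apply TensorProduct.ext'
    intro v v'
    simp only [LinearMap.sum_apply, LinearMap.coe_comp, Function.comp_apply, psi_tmul,
      TensorProduct.mk_apply, LinearMap.id_apply]
    simp_rw [TensorProduct.tmul_smul, TensorProduct.smul_tmul', ← TensorProduct.sum_tmul,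
      Module.Basis.coord_apply, Module.Basis.sum_repr]
  simpa using LinearMap.congr_fun this w

omit [Fintype ι] [DecidableEq ι] in
lemma psi_equivariant (c : Module.Basis ι k V) (i : ι) (T : V' →ₗ[k] V') (w : V ⊗[k] V') :
    psi c i (TensorProduct.map LinearMap.id T w) = T (psi c i w) := by
  have : (psi c i).comp (TensorProduct.map LinearMap.id T) = T.comp (psi c i) := by
    apply TensorProduct.ext'
    intro v v'
    simp [psi_tmul, map_smul]
  exact LinearMap.congr_fun this w
end coords

def CobTriv {G : Type} [Group G] {W : Type} [AddCommGroup W] [Module k W]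
    (ρ : Representation k G W) : Prop :=
  ∀ f : G → W, (∀ g h, f (g * h) = ρ g (f h) + f g) → ∃ x, ∀ g, f g = ρ g x - x

section lemmas
variable {G : Type} [Group G]

lemma cobTriv_tensor_left [FiniteDimensional k V'] (ρ : Representation k G V)
    (h : CobTriv ρ) (f : G → V ⊗[k] V')
    (hf : ∀ g g₂, f (g * g₂) = TensorProduct.map (ρ g) LinearMap.id (f g₂) + f g) :
    ∃ x, ∀ g, f g = TensorProduct.map (ρ g) LinearMap.id x - x := by
  classical
  let b := Module.finBasis k V'
  have hi : ∀ i, ∃ x, ∀ g, phi b i (f g) = ρ g x - x := fun i =>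
    h (fun g => phi b i (f g)) (by
      intro g g₂
      rw [hf g g₂, map_add, phi_equivariant])
  choose x hx using hi
  refine ⟨∑ i, x i ⊗ₜ[k] b i, fun g => ?_⟩
  rw [map_sum, ← Finset.sum_sub_distrib]
  simp_rw [TensorProduct.map_tmul, LinearMap.id_apply, ← TensorProduct.sub_tmul, ← hx]
  exact (phi_recon b (f g)).symm

lemma cobTriv_tensor_right [FiniteDimensional k V] (ρ' : Representation k G V')
    (h : CobTriv ρ') (f : G → V ⊗[k] V')
    (hf : ∀ g g₂, f (g * g₂) = TensorProduct.map LinearMap.id (ρ' g) (f g₂) + f g) :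
    ∃ x, ∀ g, f g = TensorProduct.map LinearMap.id (ρ' g) x - x := by
  classical
  let c := Module.finBasis k V
  have hi : ∀ i, ∃ x, ∀ g, psi c i (f g) = ρ' g x - x := fun i =>
    h (fun g => psi c i (f g)) (by
      intro g g₂
      rw [hf g g₂, map_add, psi_equivariant])
  choose x hx using hi
  refine ⟨∑ i, c i ⊗ₜ[k] x i, fun g => ?_⟩
  rw [map_sum, ← Finset.sum_sub_distrib]
  simp_rw [TensorProduct.map_tmul, LinearMap.id_apply, ← TensorProduct.tmul_sub, ← hx]
  exact (psi_recon c (f g)).symm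

lemma mem_range_invariants [FiniteDimensional k V'] (ρ : Representation k G V)
    (w : V ⊗[k] V') (hw : ∀ g, TensorProduct.map (ρ g) LinearMap.id w = w) :
    w ∈ LinearMap.range (TensorProduct.map ρ.invariants.subtype
      (LinearMap.id : V' →ₗ[k] V')) := by
  classical
  let b := Module.finBasis k V'
  have hinv : ∀ i, phi b i w ∈ ρ.invariants := by
    intro i g
    rw [← phi_equivariant b i (ρ g) w, hw g]
  refine ⟨∑ i, (⟨phi b i w, hinv i⟩ : ρ.invariants) ⊗ₜ[k] b i, ?_⟩
  rw [map_sum]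
  simp_rw [TensorProduct.map_tmul, LinearMap.id_apply, Submodule.coe_subtype]
  exact phi_recon b w
end lemmas
open TensorProduct

private theorem main_test
    (k : Type) [Field k] (G G' : Type) [Group G] [Group G']
    (V V' : Type) [AddCommGroup V] [Module k V] [AddCommGroup V'] [Module k V']
    [FiniteDimensional k V] [FiniteDimensional k V']
    (ρ : Representation k G V) (ρ' : Representation k G' V')
    (h1 : ∀ f : G → V, (∀ g h, f (g * h) = ρ g (f h) + f g) → ∃ x, ∀ g, f g = ρ g x - x)
    (h2 : ∀ f : G' → V', (∀ g h, f (g * h) = ρ' g (f h) + f g) → ∃ x, ∀ g, f g = ρ' g x - x)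
    (c : G × G' → V ⊗[k] V')
    (hc : ∀ p q, c (p * q) =
      TensorProduct.map (ρ p.1) (ρ' p.2) (c q) + c p) :
    ∃ x, ∀ p : G × G', c p = TensorProduct.map (ρ p.1) (ρ' p.2) x - x := by
  -- Step 1: restriction to G is a coboundary
  have hfa : ∀ g h : G, c ((g * h : G), (1 : G')) =
      TensorProduct.map (ρ g) LinearMap.id (c (h, 1)) + c (g, 1) := by
    intro g h
    have := hc (g, 1) (h, 1)
    simpa [Prod.mk_mul_mk, map_one, Module.End.one_eq_id] using this
  obtain ⟨w, hw⟩ := cobTriv_tensor_left ρ h1 (fun g => c (g, (1 : G'))) hfa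
  -- modified cocycle
  set c₂ : G × G' → V ⊗[k] V' :=
    fun p => c p - (TensorProduct.map (ρ p.1) (ρ' p.2) w - w) with hc₂def
  have hc2 : ∀ p q, c₂ (p * q) = TensorProduct.map (ρ p.1) (ρ' p.2) (c₂ q) + c₂ p := by
    intro p q
    simp only [hc₂def, hc p q, Prod.fst_mul, Prod.snd_mul, map_mul, map_sub,
      Module.End.mul_apply, TensorProduct.map_mul]
    abel
  have hc2G : ∀ g : G, c₂ (g, (1 : G')) = 0 := by
    intro g
    have : TensorProduct.map (ρ g) (ρ' 1) w = TensorProduct.map (ρ g) LinearMap.id w := by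
      rw [map_one]; rfl
    simp only [hc₂def, this, hw g, sub_self]
  set b : G' → V ⊗[k] V' := fun g' => c₂ ((1 : G), g') with hbdef
  have hcb : ∀ (g : G) (g' : G'), c₂ (g, g') = TensorProduct.map (ρ g) LinearMap.id (b g') := by
    intro g g'
    have h1' := hc2 (g, 1) (1, g')
    have : ((g, (1 : G')) * ((1 : G), g')) = (g, g') := by simp [Prod.mk_mul_mk]
    rw [this] at h1'
    rw [h1', hc2G g, add_zero, hbdef]
    congr 1
    rw [map_one]; rfl
  have hbinv : ∀ (g : G) (g' : G'), TensorProduct.map (ρ g) LinearMap.id (b g') = b g' := by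
    intro g g'
    have h2' := hc2 ((1 : G), g') (g, (1 : G'))
    have : (((1 : G), g') * (g, (1 : G'))) = (g, g') := by simp [Prod.mk_mul_mk]
    rw [this] at h2'
    rw [hc2G g, map_zero, zero_add] at h2'
    rw [← hcb g g', h2']
  have hbc : ∀ g' h' : G', b (g' * h') = TensorProduct.map LinearMap.id (ρ' g') (b h') + b g' := by
    intro g' h'
    have := hc2 ((1 : G), g') ((1 : G), h')
    have heq : (((1 : G), g') * ((1 : G), h')) = ((1 : G), g' * h') := by simp [Prod.mk_mul_mk]
    rw [heq] at this
    rw [hbdef]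
    simp only []
    rw [this]
    congr 2
    rw [map_one]; rfl
  -- Step 2: lift b to the invariants
  set ι : ρ.invariants ⊗[k] V' →ₗ[k] V ⊗[k] V' :=
    TensorProduct.map ρ.invariants.subtype LinearMap.id with hιdef
  have hιinj : Function.Injective ι := by
    rw [hιdef]
    exact Module.Flat.rTensor_preserves_injective_linearMap _ ρ.invariants.injective_subtype
  have hblift : ∀ g', ∃ y, ι y = b g' := fun g' =>
    mem_range_invariants ρ (b g') (fun g => hbinv g g')
  choose β hβ using hblift
  have hcomm : ∀ (g' : G') (y : ρ.invariants ⊗[k] V'),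
      TensorProduct.map LinearMap.id (ρ' g') (ι y) = ι (TensorProduct.map LinearMap.id (ρ' g') y) := by
    intro g' y
    rw [hιdef, ← LinearMap.comp_apply, ← TensorProduct.map_comp, ← LinearMap.comp_apply,
      ← TensorProduct.map_comp]
    simp
  have hβc : ∀ g' h' : G', β (g' * h') =
      TensorProduct.map LinearMap.id (ρ' g') (β h') + β g' := by
    intro g' h'
    apply hιinj
    rw [hβ, map_add, ← hcomm, hβ, hβ, hbc]
  obtain ⟨u', hu'⟩ := cobTriv_tensor_right ρ' h2 β hβc
  set u : V ⊗[k] V' := ι u' with hudef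
  have hbu : ∀ g', b g' = TensorProduct.map LinearMap.id (ρ' g') u - u := by
    intro g'
    rw [← hβ, hu' g', map_sub, hudef, hcomm]
  have hufix : ∀ g : G, TensorProduct.map (ρ g) LinearMap.id u = u := by
    intro g
    rw [hudef, hιdef, ← LinearMap.comp_apply, ← TensorProduct.map_comp]
    congr 2
    exact LinearMap.ext fun v => v.2 g
  -- Final assembly
  refine ⟨w + u, fun p => ?_⟩
  obtain ⟨g, g'⟩ := p
  have key : c (g, g') = c₂ (g, g') + (TensorProduct.map (ρ g) (ρ' g') w - w) := by
    simp [hc₂def]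
  rw [key, hcb g g', hbu g', map_sub, hufix g, ← LinearMap.comp_apply,
    ← TensorProduct.map_comp, LinearMap.comp_id, LinearMap.id_comp]
  simp only [map_add]
  abel

section iface
variable {k : Type} [Field k] {G : Type} [Group G] {V : Type} [AddCommGroup V] [Module k V]

lemma cobTriv_of_subsingleton (ρ : Representation k G V)
    (h : Subsingleton (groupCohomology.H1 (Rep.of ρ))) : CobTriv ρ := by
  intro f hf
  have hmem : f ∈ cocycles₁ (Rep.of ρ) := (mem_cocycles₁_iff (A := Rep.of ρ) f).2 hf
  have : f ∈ coboundaries₁ (Rep.of ρ) :=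
    (H1π_eq_zero_iff (⟨f, hmem⟩ : cocycles₁ (Rep.of ρ))).1 (Subsingleton.elim _ _)
  obtain ⟨x, hx⟩ := this
  exact ⟨x, fun g => by rw [← hx]; rfl⟩

lemma subsingleton_of_cobTriv (ρ : Representation k G V) (h : CobTriv ρ) :
    Subsingleton (groupCohomology.H1 (Rep.of ρ)) := by
  suffices H : ∀ x : groupCohomology.H1 (Rep.of ρ), x = 0 from
    ⟨fun a b => (H a).trans (H b).symm⟩
  intro x
  refine H1_induction_on x fun y => ?_
  obtain ⟨f, hf⟩ := y
  obtain ⟨x, hx⟩ := h f ((mem_cocycles₁_iff (A := Rep.of ρ) f).1 hf)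
  exact (H1π_eq_zero_iff _).2 ⟨x, funext fun g => (hx g).symm⟩

end iface

/-- If `H¹(G, V) = 0` and `H¹(G', V') = 0`, then the first group cohomology of
the product group `G × G'` with coefficients in the tensor product representation `V ⊗[k] V'`
(where `(g, g') • (v ⊗ v') = ρ g v ⊗ ρ' g' v'`) also vanishes. -/
theorem h1_tensor_product_of_h1_eq_zero
    (k : Type) [Field k] (G G' : Type) [Group G] [Group G']
    (V V' : Type) [AddCommGroup V] [Module k V] [AddCommGroup V'] [Module k V']
    [FiniteDimensional k V] [FiniteDimensional k V']
    (ρ : Representation k G V) (ρ' : Representation k G' V')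
    (h : Subsingleton (groupCohomology.H1 (Rep.of ρ)))
    (h' : Subsingleton (groupCohomology.H1 (Rep.of ρ'))) :
    Subsingleton (groupCohomology.H1 (Rep.of
      (Representation.tprod (ρ.comp (MonoidHom.fst G G')) (ρ'.comp (MonoidHom.snd G G'))))) := by
  apply subsingleton_of_cobTriv
  intro c hc
  exact main_test k G G' V V' ρ ρ' (cobTriv_of_subsingleton ρ h) (cobTriv_of_subsingleton ρ' h') c hc
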